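/- Let a ≥ 1 and ι ∈ [0,1]. For every x ≥ 0, min{max{a, x, x²}, x³} ≤ a^{(1-ι)/3} x^{2+ι}. (This can be verified by splitting into the cases x ≤ 1, 1 < x ≤ a^{1/3}, a^{1/3} < x ≤ a^{1/2}, and x > a^{1/2}.) -/
import Mathlib


theorem min_max_le_rpow (a x ι : ℝ) (ha : 1 ≤ a) (hx : 0 ≤ x) (hι0 : 0 ≤ ι) (hι1 : ι ≤ 1) :
    min (max a (max x (x ^ 2))) (x ^ 3) ≤ a ^ ((1 - ι) / 3) * x ^ (2 + ι) := by
  have ha0 : (0:ℝ) < a := lt_of_lt_of_le one_pos ha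
  have hexp : (0:ℝ) ≤ (1 - ι) / 3 := by linarith
  have hone : (1:ℝ) ≤ a ^ ((1 - ι) / 3) := by
    calc (1:ℝ) = a ^ (0:ℝ) := (Real.rpow_zero a).symm
    _ ≤ a ^ ((1 - ι) / 3) := Real.rpow_le_rpow_of_exponent_le ha hexp
  rcases eq_or_lt_of_le hx with h0 | hxpos
  · have : x = 0 := h0.symm
    subst this
    simp only [ne_eq, OfNat.ofNat_ne_zero, not_false_eq_true, zero_pow]
    rw [Real.zero_rpow (by linarith), mul_zero]
    exact min_le_of_right_le le_rfl
  rcases le_or_gt x 1 with hx1 | hx1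
  · -- x ≤ 1 : min ≤ x^3 ≤ x^(2+ι) ≤ RHS
    refine le_trans (min_le_right _ _) ?_
    have h1 : x ^ (3:ℕ) = x ^ ((3:ℕ):ℝ) := (Real.rpow_natCast x 3).symm
    have h2 : x ^ ((3:ℕ):ℝ) ≤ x ^ (2 + ι) := by
      apply Real.rpow_le_rpow_of_exponent_ge hxpos hx1
      push_cast; linarith
    calc x ^ 3 ≤ x ^ (2 + ι) := by rw [h1]; exact h2
    _ = 1 * x ^ (2 + ι) := (one_mul _).symm
    _ ≤ a ^ ((1 - ι) / 3) * x ^ (2 + ι) := by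
        apply mul_le_mul_of_nonneg_right hone (Real.rpow_nonneg hx _)
  · -- 1 ≤ x
    have hx1' : (1:ℝ) ≤ x := hx1.le
    rcases le_or_gt (x ^ 3) a with hxa | hax
    · -- x^3 ≤ a
      refine le_trans (min_le_right _ _) ?_
      have key : x ^ ((1:ℝ) - ι) ≤ a ^ ((1 - ι) / 3) := by
        have : x ^ ((1:ℝ) - ι) = (x ^ (3:ℕ)) ^ ((1 - ι) / 3) := by
          rw [← Real.rpow_natCast x 3, ← Real.rpow_mul hx]
          congr 1; push_cast; ring
        rw [this]
        exact Real.rpow_le_rpow (by positivity) hxa hexp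
      calc x ^ 3 = x ^ ((1 - ι) + (2 + ι)) := by
            rw [show (1 - ι) + (2 + ι) = ((3:ℕ):ℝ) by push_cast; ring,
              Real.rpow_natCast]
      _ = x ^ ((1:ℝ) - ι) * x ^ (2 + ι) := Real.rpow_add hxpos _ _
      _ ≤ a ^ ((1 - ι) / 3) * x ^ (2 + ι) :=
          mul_le_mul_of_nonneg_right key (Real.rpow_nonneg hx _)
    · -- a < x^3
      have hxx2 : x ≤ x ^ 2 := by nlinarith
      rcases le_or_gt a (x ^ 2) with hax2 | hx2a
      · -- max = x^2 ≤ x^(2+ι) ≤ RHS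
        refine le_trans (min_le_left _ _) ?_
        have hmax : max a (max x (x ^ 2)) = x ^ 2 := by
          rw [max_eq_right hxx2, max_eq_right hax2]
        rw [hmax]
        have h2 : x ^ (2:ℕ) = x ^ ((2:ℕ):ℝ) := (Real.rpow_natCast x 2).symm
        calc x ^ 2 ≤ x ^ (2 + ι) := by
              rw [h2]
              exact Real.rpow_le_rpow_of_exponent_le hx1' (by push_cast; linarith)
        _ = 1 * x ^ (2 + ι) := (one_mul _).symm
        _ ≤ a ^ ((1 - ι) / 3) * x ^ (2 + ι) :=
            mul_le_mul_of_nonneg_right hone (Real.rpow_nonneg hx _)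
      · -- max = a
        refine le_trans (min_le_left _ _) ?_
        have hmax : max a (max x (x ^ 2)) = a := by
          rw [max_eq_right hxx2, max_eq_left hx2a.le]
        rw [hmax]
        have key : a ^ ((2 + ι) / 3) ≤ x ^ (2 + ι) := by
          have : x ^ (2 + ι) = (x ^ (3:ℕ)) ^ ((2 + ι) / 3) := by
            rw [← Real.rpow_natCast x 3, ← Real.rpow_mul hx]
            congr 1; push_cast; ring
          rw [this]
          exact Real.rpow_le_rpow ha0.le hax.le (by linarith)
        calc a = a ^ ((1 - ι) / 3 + (2 + ι) / 3) := by
              rw [show (1 - ι) / 3 + (2 + ι) / 3 = 1 by ring, Real.rpow_one]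
        _ = a ^ ((1 - ι) / 3) * a ^ ((2 + ι) / 3) := Real.rpow_add ha0 _ _
        _ ≤ a ^ ((1 - ι) / 3) * x ^ (2 + ι) :=
            mul_le_mul_of_nonneg_left key (Real.rpow_nonneg ha0.le _)
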